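/- Let N ≥ 1 be an integer and k, ξ, ζ ≥ 0 reals with ζ ≥ max((ξ² − 8)/(8N), (ξ − 2)/(2N)). Then for every y ∈ [0,1]^N with avg(y) + ζ > 0, writing σ := avg(y) = (1/N)Σ_j y_j, the symmetric matrix S(y) := (2k/N)(σ+ζ)^ξ I_N + (k/N)(σ+ζ)^{ξ−1}·(2(σ+ζ)𝟏𝟏ᵀ + (ξ/N)(y𝟏ᵀ + 𝟏yᵀ)) is positive semidefinite. -/

import Mathlib

/-- Core: `v² ≤ A²` and `0 ≤ A` imply `0 ≤ A + v`. -/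
lemma stmt_10_core (A v : ℝ) (hA : 0 ≤ A) (hv : v ^ 2 ≤ A ^ 2) :
    0 ≤ A + v := by
  nlinarith [sq_nonneg (A + v)]

/-- Key bound: `ξ² P ≤ 4 (T + M)²` where `P ≤ T`, `P ≤ T²`. -/
lemma stmt_10_key (ξ M T P : ℝ) (hξ : 0 ≤ ξ) (hM : 0 ≤ M) (hT : 0 ≤ T)
    (hP0 : 0 ≤ P) (hPT : P ≤ T) (hPT2 : P ≤ T ^ 2)
    (h1 : ξ ^ 2 ≤ 8 * M + 8) (h2 : ξ ≤ 2 * M + 2) :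
    ξ ^ 2 * P ≤ 4 * (T + M) ^ 2 := by
  rcases le_total T 1 with hT1 | hT1
  · have h3 : ξ * T ≤ 2 * (T + M) := by nlinarith
    have : ξ ^ 2 * P ≤ ξ ^ 2 * T ^ 2 := by nlinarith
    nlinarith [mul_nonneg hξ hT]
  · rcases le_total M 1 with hM1 | hM1
    · have hsq : ξ ^ 2 ≤ (2 * M + 2) ^ 2 := by nlinarith
      have h3 : ξ ^ 2 * T ≤ 4 * (M + 1) ^ 2 * T := by nlinarith
      have h4 : 4 * (M + 1) ^ 2 * T ≤ 4 * (T + M) ^ 2 := by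
        nlinarith [mul_nonneg (sub_nonneg.mpr hT1)
          (sub_nonneg.mpr (by nlinarith : M ^ 2 ≤ T))]
      nlinarith
    · have h3 : ξ ^ 2 * T ≤ (8 * M + 8) * T := by nlinarith
      have h4 : (8 * M + 8) * T ≤ 4 * (T + M) ^ 2 := by nlinarith [sq_nonneg (T - 1)]
      nlinarith

/-- Expansion of the quadratic form of the matrix
`a I + b (2s 𝟏𝟏ᵀ + c (y𝟏ᵀ + 𝟏yᵀ))`. -/
lemma stmt_10_expand {n : ℕ} (a b s c : ℝ) (y x : Fin n → ℝ) :
    dotProduct (star x) ((Matrix.of fun i j : Fin n =>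
      a * (if i = j then (1 : ℝ) else 0) + b * (2 * s + c * (y i + y j))).mulVec x)
    = a * (∑ i, x i * x i) + 2 * b * s * ((∑ i, x i) * (∑ i, x i))
      + 2 * b * c * ((∑ i, x i) * (∑ i, y i * x i)) := by
  have aux : ∀ (g h : Fin n → ℝ) (r : ℝ),
      (∑ i, ∑ j, r * (g i * h j)) = r * ((∑ i, g i) * (∑ j, h j)) := by
    intro g h r
    rw [Finset.sum_mul_sum, Finset.mul_sum]
    exact Finset.sum_congr rfl fun i _ => by rw [Finset.mul_sum]
  have claim : ∀ i j : Fin n,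
      x i * ((a * (if i = j then (1:ℝ) else 0) + b * (2 * s + c * (y i + y j))) * x j)
      = (if i = j then a * (x i * x j) else 0) + ((2*b*s) * (x i * x j)
        + ((b*c) * ((y i * x i) * x j) + (b*c) * (x i * (y j * x j)))) := by
    intro i j; by_cases h : i = j <;> simp [h] <;> ring
  simp only [dotProduct, Matrix.mulVec, Pi.star_apply, star_trivial,
    Matrix.of_apply]
  rw [show (∑ i, x i * ∑ j, (a * (if i = j then (1:ℝ) else 0)
        + b * (2 * s + c * (y i + y j))) * x j)
      = ∑ i, ∑ j, ((if i = j then a * (x i * x j) else 0) + ((2*b*s) * (x i * x j)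
        + ((b*c) * ((y i * x i) * x j) + (b*c) * (x i * (y j * x j))))) from
    Finset.sum_congr rfl fun i _ => by
      rw [Finset.mul_sum]; exact Finset.sum_congr rfl fun j _ => claim i j]
  simp only [Finset.sum_add_distrib]
  rw [aux x x (2*b*s), aux (fun i => y i * x i) x (b*c), aux x (fun j => y j * x j) (b*c)]
  simp only [Finset.sum_ite_eq, Finset.mem_univ, if_true]
  rw [← Finset.mul_sum]
  ring

/-- Under the condition `ζ ≥ max((ξ²−8)/(8N), (ξ−2)/(2N))`, the
symmetrized game Jacobian `S(y) = (2k/N)(σ+ζ)^ξ I + (k/N)(σ+ζ)^{ξ−1}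
(2(σ+ζ)𝟏𝟏ᵀ + (ξ/N)(y𝟏ᵀ + 𝟏yᵀ))` is positive semidefinite on `[0,1]^N`
whenever `avg(y) + ζ > 0`. -/
theorem stmt_10 (N : ℕ) (hN : 1 ≤ N) (k ξ ζ : ℝ)
    (hk : 0 ≤ k) (hξ : 0 ≤ ξ) (hζ : 0 ≤ ζ)
    (hcond : max ((ξ ^ 2 - 8) / (8 * N)) ((ξ - 2) / (2 * N)) ≤ ζ) :
    ∀ y : Fin N → ℝ, (∀ i, y i ∈ Set.Icc (0 : ℝ) 1) →
      0 < (∑ j, y j) / N + ζ →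
      (Matrix.of fun i j : Fin N =>
        (2 * k / N) * ((∑ l, y l) / N + ζ) ^ ξ * (if i = j then (1 : ℝ) else 0) +
        (k / N) * ((∑ l, y l) / N + ζ) ^ (ξ - 1) *
          (2 * ((∑ l, y l) / N + ζ) + (ξ / N) * (y i + y j))).PosSemidef := by
  intro y hy hspos
  have hn0 : (0 : ℝ) < N := by exact_mod_cast Nat.pos_of_ne_zero (by omega)
  set s : ℝ := (∑ l, y l) / N + ζ with hs_def
  set a : ℝ := (2 * k / N) * s ^ ξ with ha_def
  set b : ℝ := (k / N) * s ^ (ξ - 1) with hb_def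
  set c : ℝ := ξ / N with hc_def
  have hb0 : 0 ≤ b := by
    apply mul_nonneg (by positivity)
    exact le_of_lt (Real.rpow_pos_of_pos hspos _)
  have hab : a = 2 * s * b := by
    have h : s ^ ξ = s ^ (ξ - 1) * s := by
      rw [← Real.rpow_add_one (ne_of_gt hspos) (ξ - 1)]
      ring_nf
    rw [ha_def, hb_def, h]; ring
  rw [Matrix.posSemidef_iff_dotProduct_mulVec]
  constructor
  · -- Hermitian
    ext i j
    simp only [Matrix.conjTranspose_apply, Matrix.of_apply, star_trivial]
    by_cases h : i = j
    · subst h; ring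
    · rw [if_neg (fun hji => h hji.symm), if_neg h]; ring
  · intro x
    rw [stmt_10_expand a b s c y x]
    -- notations
    set T : ℝ := ∑ l, y l with hT_def
    set t : ℝ := ∑ l, x l with ht_def
    set X : ℝ := ∑ l, x l * x l with hX_def
    set u : ℝ := ∑ l, y l * x l with hu_def
    set P : ℝ := ∑ l, y l * y l with hP_def
    have hX0 : 0 ≤ X := Finset.sum_nonneg fun i _ => mul_self_nonneg _
    have hP0 : 0 ≤ P := Finset.sum_nonneg fun i _ => mul_self_nonneg _
    have hT0 : 0 ≤ T := Finset.sum_nonneg fun i _ => (hy i).1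
    have hPT : P ≤ T := Finset.sum_le_sum fun i _ => by
      nlinarith [(hy i).1, (hy i).2]
    have hPT2 : P ≤ T ^ 2 := by
      have h1 : ∀ i, y i ≤ T :=
        fun i => Finset.single_le_sum (fun j _ => (hy j).1) (Finset.mem_univ i)
      have h2 : P ≤ ∑ l, y l * T :=
        Finset.sum_le_sum fun i _ => mul_le_mul_of_nonneg_left (h1 i) (hy i).1
      calc P ≤ ∑ l, y l * T := h2
        _ = T ^ 2 := by rw [← Finset.sum_mul]; ring
    have hCS : u ^ 2 ≤ P * X := by
      have h := Finset.sum_mul_sq_le_sq_mul_sq Finset.univ y x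
      calc u ^ 2 = (∑ i, y i * x i) ^ 2 := by rw [hu_def]
        _ ≤ (∑ i, y i ^ 2) * ∑ i, x i ^ 2 := h
        _ = P * X := by
              rw [hP_def, hX_def]
              congr 1 <;> exact Finset.sum_congr rfl fun i _ => by ring
    have hns : (N : ℝ) * s = T + (N : ℝ) * ζ := by
      rw [hs_def, hT_def]; field_simp
    have hcsq : c * (N : ℝ) = ξ := by
      rw [hc_def]; field_simp
    -- forget definitions, work abstractly
    clear_value s a b c T t X u P
    -- hypotheses in usable form
    have hc1 : (ξ ^ 2 - 8) / (8 * N) ≤ ζ := le_trans (le_max_left _ _) hcond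
    have hc2 : (ξ - 2) / (2 * N) ≤ ζ := le_trans (le_max_right _ _) hcond
    have h1 : ξ ^ 2 ≤ 8 * ((N : ℝ) * ζ) + 8 := by
      rw [div_le_iff₀ (by positivity)] at hc1; nlinarith
    have h2 : ξ ≤ 2 * ((N : ℝ) * ζ) + 2 := by
      rw [div_le_iff₀ (by positivity)] at hc2; nlinarith
    have hkey : ξ ^ 2 * P ≤ 4 * ((N : ℝ) * s) ^ 2 := by
      rw [hns]
      exact stmt_10_key ξ ((N : ℝ) * ζ) T P hξ (by positivity) hT0 hP0 hPT hPT2 h1 h2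
    have h4 : c ^ 2 * P ≤ 4 * s ^ 2 := by
      have hmul : c ^ 2 * P * (N : ℝ) ^ 2 ≤ 4 * s ^ 2 * (N : ℝ) ^ 2 := by
        calc c ^ 2 * P * (N : ℝ) ^ 2 = ξ ^ 2 * P := by rw [← hcsq]; ring
          _ ≤ 4 * ((N : ℝ) * s) ^ 2 := hkey
          _ = 4 * s ^ 2 * (N : ℝ) ^ 2 := by ring
      exact le_of_mul_le_mul_right hmul (by positivity)
    -- core scalar estimate
    have hA : 0 ≤ s * X + s * (t * t) :=
      add_nonneg (mul_nonneg hspos.le hX0) (mul_nonneg hspos.le (mul_self_nonneg t))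
    have hv : (c * (t * u)) ^ 2 ≤ (s * X + s * (t * t)) ^ 2 := by
      have hub : (c * (t * u)) ^ 2 ≤ 4 * s ^ 2 * (t ^ 2 * X) := by
        calc (c * (t * u)) ^ 2 = (c ^ 2 * u ^ 2) * t ^ 2 := by ring
          _ ≤ (c ^ 2 * (P * X)) * t ^ 2 :=
              mul_le_mul_of_nonneg_right
                (mul_le_mul_of_nonneg_left hCS (sq_nonneg c)) (sq_nonneg t)
          _ = (c ^ 2 * P) * (X * t ^ 2) := by ring
          _ ≤ (4 * s ^ 2) * (X * t ^ 2) :=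
              mul_le_mul_of_nonneg_right h4 (mul_nonneg hX0 (sq_nonneg t))
          _ = 4 * s ^ 2 * (t ^ 2 * X) := by ring
      calc (c * (t * u)) ^ 2 ≤ 4 * s ^ 2 * (t ^ 2 * X) := hub
        _ ≤ (s * X + s * (t * t)) ^ 2 := by
            have hr : (s * X + s * (t * t)) ^ 2 - 4 * s ^ 2 * (t ^ 2 * X)
                = (s * X - s * (t * t)) ^ 2 := by ring
            linarith [sq_nonneg (s * X - s * (t * t)), hr]
    have hcore : 0 ≤ s * X + s * (t * t) + c * (t * u) := stmt_10_core _ _ hA hv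
    have hfin : a * X + 2 * b * s * (t * t) + 2 * b * c * (t * u)
        = 2 * b * (s * X + s * (t * t) + c * (t * u)) := by rw [hab]; ring
    rw [hfin]
    exact mul_nonneg (by linarith) hcore
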